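/- Existence of semibalanced representatives (Caporaso): Let G be a semistable connected weighted graph of genus g ≥ 2, i.e., every vertex v with ω(v) = 0 has val(v) ≥ 2. Then every divisor d on G is linearly equivalent to a semibalanced divisor, i.e., to a divisor d' such that for every subset Z ⊆ V: deg(d)·k_G(Z)/(2g−2) − (Z·Z^c)/2 ≤ d'(Z) ≤ deg(d)·k_G(Z)/(2g−2) + (Z·Z^c)/2, where these inequalities are among rational numbers, d'(Z) = Σ_{v∈Z} d'(v), k_G(Z) = Σ_{v∈Z} k_G(v), and Z·Z^c = Σ_{v∈Z, u∉Z} m(v,u). -/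

import Mathlib

open Finset

section Preliminaries

variable {V : Type} [Fintype V] [DecidableEq V]

/-- The degree of a divisor on a graph with vertex set `V`. -/
def degDiv (d : V → ℤ) : ℤ := ∑ v, d v

/-- A divisor is effective if it is nonnegative at every vertex. -/
def Effective (d : V → ℤ) : Prop := ∀ v, 0 ≤ d v

/-- The principal divisor `t_Z` associated to a subset `Z` of vertices, for the
graph with edge multiplicity function `m`. -/
def tZ (m : V → V → ℕ) (Z : Finset V) : V → ℤ := fun v =>
  if v ∈ Z then -(∑ u ∈ Zᶜ, (m v u : ℤ)) else ∑ u ∈ Z, (m v u : ℤ)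

/-- Two divisors are linearly equivalent if their difference lies in the subgroup
generated by the divisors `t_Z`. -/
def LinEquiv (m : V → V → ℕ) (d d' : V → ℤ) : Prop :=
  d - d' ∈ AddSubgroup.closure (Set.range (tZ m))

/-- The simple graph associated to an edge multiplicity function `m`
(an edge between distinct `u`, `v` whenever `m u v > 0`; loops are discarded). -/
def assocGraph (m : V → V → ℕ) : SimpleGraph V where
  Adj u v := u ≠ v ∧ (0 < m u v ∨ 0 < m v u)
  symm := ⟨fun _ _ h => ⟨h.1.symm, h.2.symm⟩⟩
  loopless := ⟨fun _ h => h.1 rfl⟩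

end Preliminaries

section Weighted

variable {V : Type} [Fintype V] [DecidableEq V]

/-- The valence of a vertex of a weighted graph with loops:
`val(v) = ∑_{u ≠ v} m v u + 2 * m v v`. -/
def valence (m : V → V → ℕ) (v : V) : ℤ := (∑ u, (m v u : ℤ)) + m v v

/-- The genus of a weighted graph with loops:
`g = |E| - |V| + 1 + ∑_v ω v` where `|E| = ∑_v m v v + (1/2) ∑_{u ≠ v} m u v`. -/
def genusW (m : V → V → ℕ) (ω : V → ℕ) : ℤ :=
  ((∑ u, ∑ v, (m u v : ℤ)) + ∑ v, (m v v : ℤ)) / 2 - Fintype.card V + 1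
    + ∑ v, (ω v : ℤ)

/-- The canonical divisor of a weighted graph with loops:
`k_G(v) = 2 ω(v) - 2 + val(v)`. -/
def canonicalW (m : V → V → ℕ) (ω : V → ℕ) : V → ℤ :=
  fun v => 2 * (ω v : ℤ) - 2 + valence m v

end Weighted

namespace Semibal

set_option linter.unusedSectionVars false

variable {V : Type} [Fintype V] [DecidableEq V]

/-- The (rational) Laplacian of the graph applied to a function. -/
def Lap (m : V → V → ℕ) (f : V → ℚ) : V → ℚ :=
  fun v => ∑ u, (m v u : ℚ) * (f v - f u)

lemma lap_add (m : V → V → ℕ) (f g : V → ℚ) :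
    Lap m (f + g) = Lap m f + Lap m g := by
  funext v
  simp only [Lap, Pi.add_apply, ← Finset.sum_add_distrib]
  exact Finset.sum_congr rfl fun u _ => by ring

lemma lap_neg (m : V → V → ℕ) (f : V → ℚ) :
    Lap m (-f) = -Lap m f := by
  funext v
  simp only [Lap, Pi.neg_apply, ← Finset.sum_neg_distrib]
  exact Finset.sum_congr rfl fun u _ => by ring

lemma lap_sub (m : V → V → ℕ) (f g : V → ℚ) :
    Lap m (f - g) = Lap m f - Lap m g := by
  rw [sub_eq_add_neg, lap_add, lap_neg, sub_eq_add_neg]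

lemma lap_sum_zero (m : V → V → ℕ) (hsymm : ∀ u v, m u v = m v u) (f : V → ℚ) :
    ∑ v, Lap m f v = 0 := by
  simp only [Lap, mul_sub, Finset.sum_sub_distrib]
  rw [Finset.sum_comm (f := fun v u => (m v u : ℚ) * f u)]
  simp only [sub_eq_zero]
  exact Finset.sum_congr rfl fun v _ => Finset.sum_congr rfl fun u _ => by
    rw [hsymm v u]

lemma lap_expand (m : V → V → ℕ) (a b : V → ℚ) :
    ∑ v, a v * Lap m b v
      = (∑ v, ∑ u, (m v u : ℚ) * (a v * b v)) - ∑ v, ∑ u, (m v u : ℚ) * (a v * b u) := by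
  simp only [Lap, Finset.mul_sum, ← Finset.sum_sub_distrib]
  exact Finset.sum_congr rfl fun v _ => Finset.sum_congr rfl fun u _ => by ring

lemma lap_sym (m : V → V → ℕ) (hsymm : ∀ u v, m u v = m v u) (f g : V → ℚ) :
    ∑ v, g v * Lap m f v = ∑ v, f v * Lap m g v := by
  rw [lap_expand, lap_expand]
  congr 1
  · exact Finset.sum_congr rfl fun v _ => Finset.sum_congr rfl fun u _ => by ring
  · rw [Finset.sum_comm]
    exact Finset.sum_congr rfl fun v _ => Finset.sum_congr rfl fun u _ => by
      rw [hsymm v u]; ring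

lemma lap_quad (m : V → V → ℕ) (hsymm : ∀ u v, m u v = m v u) (f : V → ℚ) :
    2 * ∑ v, f v * Lap m f v = ∑ v, ∑ u, (m v u : ℚ) * (f v - f u)^2 := by
  have swap : (∑ v, ∑ u, (m v u:ℚ) * (f u)^2) = ∑ v, ∑ u, (m v u:ℚ) * (f v)^2 := by
    rw [Finset.sum_comm]
    exact Finset.sum_congr rfl fun v _ => Finset.sum_congr rfl fun u _ => by rw [hsymm v u]
  have e1 := lap_expand m f f
  have e2 : ∑ v, ∑ u, (m v u:ℚ)*(f v - f u)^2
      = ((∑ v, ∑ u, (m v u:ℚ) * (f v)^2) - 2 * (∑ v, ∑ u, (m v u:ℚ) * (f v * f u)))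
        + ∑ v, ∑ u, (m v u:ℚ) * (f u)^2 := by
    simp only [Finset.mul_sum, ← Finset.sum_sub_distrib, ← Finset.sum_add_distrib]
    exact Finset.sum_congr rfl fun v _ => Finset.sum_congr rfl fun u _ => by ring
  have e3 : (∑ v, ∑ u, (m v u:ℚ) * (f v * f v)) = ∑ v, ∑ u, (m v u:ℚ) * (f v)^2 :=
    Finset.sum_congr rfl fun v _ => Finset.sum_congr rfl fun u _ => by ring
  rw [e1, e3, e2, swap]; ring

lemma lap_quad_nonneg (m : V → V → ℕ) (hsymm : ∀ u v, m u v = m v u) (f : V → ℚ) :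
    0 ≤ ∑ v, f v * Lap m f v := by
  have h := lap_quad m hsymm f
  nlinarith [Finset.sum_nonneg (fun v (_ : v ∈ Finset.univ) =>
    Finset.sum_nonneg (fun u (_ : u ∈ Finset.univ) =>
      mul_nonneg (by positivity : (0:ℚ) ≤ (m v u : ℚ)) (sq_nonneg (f v - f u))))]

lemma const_of_edge_const (m : V → V → ℕ) (hconn : (assocGraph m).Connected)
    (f : V → ℚ) (h : ∀ u v, m u v ≠ 0 → f u = f v) : ∀ u v, f u = f v := by
  intro u v
  obtain ⟨p⟩ := hconn.preconnected u v
  induction p with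
  | nil => rfl
  | @cons a b c hadj p ih =>
    obtain ⟨_, h1 | h2⟩ : a ≠ b ∧ (0 < m a b ∨ 0 < m b a) := hadj
    · exact (h a b h1.ne').trans ih
    · exact ((h b a h2.ne').symm).trans ih

/-- The Laplacian as a linear map. -/
noncomputable def lapLin (m : V → V → ℕ) : (V → ℚ) →ₗ[ℚ] (V → ℚ) where
  toFun := Lap m
  map_add' f g := lap_add m f g
  map_smul' c f := by
    funext v
    simp only [Lap, Pi.smul_apply, smul_eq_mul, Finset.mul_sum, RingHom.id_apply]
    exact Finset.sum_congr rfl fun u _ => by ring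

/-- Summation of coordinates as a linear map. -/
noncomputable def sumLin : (V → ℚ) →ₗ[ℚ] ℚ where
  toFun f := ∑ v, f v
  map_add' f g := by simp [Finset.sum_add_distrib]
  map_smul' c f := by simp [Finset.mul_sum]

lemma lap_surj (m : V → V → ℕ) (hsymm : ∀ u v, m u v = m v u)
    (hconn : (assocGraph m).Connected) :
    ∀ y : V → ℚ, (∑ v, y v = 0) → ∃ f, Lap m f = y := by
  haveI hne : Nonempty V := hconn.nonempty
  obtain ⟨v₀⟩ := id hne
  have hker : LinearMap.ker (lapLin m) = Submodule.span ℚ {(fun _ => (1:ℚ) : V → ℚ)} := by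
    apply le_antisymm
    · intro f hf
      have hf0 : Lap m f = 0 := hf
      have hq : ∑ v, f v * Lap m f v = 0 := by rw [hf0]; simp
      have h2 : ∑ v, ∑ u, (m v u:ℚ) * (f v - f u)^2 = 0 := by
        rw [← lap_quad m hsymm f, hq]; ring
      have hz : ∀ v ∈ Finset.univ, ∀ u ∈ Finset.univ, (m v u:ℚ) * (f v - f u)^2 = 0 := by
        have h3 := (Finset.sum_eq_zero_iff_of_nonneg (fun v _ =>
          Finset.sum_nonneg fun u _ => mul_nonneg (by positivity) (sq_nonneg _))).mp h2
        intro v hv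
        exact (Finset.sum_eq_zero_iff_of_nonneg (fun u _ =>
          mul_nonneg (by positivity) (sq_nonneg _))).mp (h3 v hv)
      have hedge : ∀ u v, m u v ≠ 0 → f u = f v := by
        intro u v hm
        have h4 := hz u (Finset.mem_univ u) v (Finset.mem_univ v)
        have h5 : ((m u v : ℚ)) ≠ 0 := Nat.cast_ne_zero.mpr hm
        have h6 : (f u - f v)^2 = 0 := by
          rcases mul_eq_zero.mp h4 with h | h
          · exact absurd h h5
          · exact h
        have := pow_eq_zero_iff (n := 2) (by norm_num) |>.mp h6
        linarith [sub_eq_zero.mp this]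
      have hc := const_of_edge_const m hconn f hedge
      have hrepr : f = (f v₀) • (fun _ => (1:ℚ) : V → ℚ) :=
        funext fun v => by simp [hc v v₀]
      rw [hrepr]
      exact Submodule.smul_mem _ _ (Submodule.mem_span_singleton_self _)
    · rw [Submodule.span_le, Set.singleton_subset_iff]
      show Lap m (fun _ => (1:ℚ)) = 0
      funext v; simp [Lap]
  have hkerrank : Module.finrank ℚ (LinearMap.ker (lapLin m)) = 1 := by
    rw [hker]
    exact finrank_span_singleton (fun h => by
      have := congrFun h v₀; simp at this)
  have hpirank : Module.finrank ℚ (V → ℚ) = Fintype.card V := by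
    simp [Module.finrank_pi]
  have hsum_surj : Function.Surjective (sumLin (V := V)) := by
    intro c
    refine ⟨fun _ => c / Fintype.card V, ?_⟩
    have hcard : (Fintype.card V : ℚ) ≠ 0 := Nat.cast_ne_zero.mpr Fintype.card_ne_zero
    show ∑ _v : V, c / (Fintype.card V : ℚ) = c
    rw [Finset.sum_const, Finset.card_univ, nsmul_eq_mul]
    field_simp
  have hrange_le : LinearMap.range (lapLin m) ≤ LinearMap.ker (sumLin (V := V)) := by
    rintro _ ⟨f, rfl⟩
    show ∑ v, Lap m f v = 0
    exact lap_sum_zero m hsymm f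
  have h1 := LinearMap.finrank_range_add_finrank_ker (lapLin m)
  have h2 := LinearMap.finrank_range_add_finrank_ker (sumLin (V := V))
  rw [hpirank] at h1 h2
  rw [hkerrank] at h1
  have hrtop : LinearMap.range (sumLin (V := V)) = ⊤ := LinearMap.range_eq_top.mpr hsum_surj
  rw [hrtop] at h2
  have hq1 : Module.finrank ℚ (⊤ : Submodule ℚ ℚ) = 1 := by simp
  rw [hq1] at h2
  have heq : LinearMap.range (lapLin m) = LinearMap.ker (sumLin (V := V)) := by
    apply Submodule.eq_of_le_of_finrank_le hrange_le
    omega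
  intro y hy
  have hy' : y ∈ LinearMap.ker (sumLin (V := V)) := hy
  rw [← heq] at hy'
  obtain ⟨f, hf⟩ := hy'
  exact ⟨f, hf⟩

lemma even_A (m : V → V → ℕ) (hsymm : ∀ u v, m u v = m v u) :
    2 ∣ ((∑ u, ∑ v, (m u v : ℤ)) + ∑ v, (m v v : ℤ)) := by
  have hS : (∑ u, ∑ v, (m u v : ℤ)) = ∑ p ∈ Finset.univ ×ˢ Finset.univ, (m p.1 p.2 : ℤ) := by
    rw [Finset.sum_product]
  have hsplit := Finset.sum_filter_add_sum_filter_not (Finset.univ ×ˢ Finset.univ)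
    (fun p : V × V => p.1 = p.2) (fun p => (m p.1 p.2 : ℤ))
  have hdiag : ∑ p ∈ (Finset.univ ×ˢ Finset.univ).filter (fun p : V × V => p.1 = p.2),
      (m p.1 p.2 : ℤ) = ∑ v, (m v v : ℤ) := by
    rw [← Finset.sum_diag (s := (Finset.univ : Finset V)) (f := fun p => (m p.1 p.2 : ℤ))]
    congr 1
    ext p; simp [Finset.mem_diag]
  have hoff : Even (∑ p ∈ (Finset.univ ×ˢ Finset.univ).filter (fun p : V × V => ¬ p.1 = p.2),
      (m p.1 p.2 : ℤ)) := by
    rw [even_iff_two_dvd, show (2:ℤ) = ((2:ℕ):ℤ) by norm_num,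
      ← ZMod.intCast_zmod_eq_zero_iff_dvd]
    push_cast
    apply Finset.sum_involution (fun p _ => (p.2, p.1))
    · intro p hp
      have : (m p.2 p.1 : ZMod 2) = (m p.1 p.2 : ZMod 2) := by rw [hsymm p.2 p.1]
      rw [this]
      exact CharTwo.add_self_eq_zero _
    · intro p hp _
      simp only [Finset.mem_filter] at hp
      intro hc
      exact hp.2 (congrArg Prod.snd hc ▸ (congrArg Prod.fst hc).symm ▸ rfl)
    · intro p hp
      simp only [Finset.mem_filter, Finset.mem_product, Finset.mem_univ, true_and] at hp ⊢
      exact fun h => hp h.symm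
    · intro p hp; rfl
  obtain ⟨k, hk⟩ := hoff
  rw [hS, ← hsplit, hdiag]
  exact ⟨k + ∑ v, (m v v : ℤ), by omega⟩

lemma canonical_sum (m : V → V → ℕ) (ω : V → ℕ) (hsymm : ∀ u v, m u v = m v u) :
    ∑ v, canonicalW m ω v = 2 * genusW m ω - 2 := by
  have hA := even_A m hsymm
  have hsum : ∑ v, canonicalW m ω v
      = 2 * (∑ v, (ω v:ℤ)) - 2 * Fintype.card V
        + ((∑ u, ∑ v, (m u v : ℤ)) + ∑ v, (m v v : ℤ)) := by
    simp only [canonicalW, valence]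
    rw [Finset.sum_add_distrib, Finset.sum_add_distrib, Finset.sum_sub_distrib,
      ← Finset.mul_sum, Finset.sum_const, Finset.card_univ]
    push_cast
    ring
  unfold genusW
  omega

/-- Indicator function of a finite set of vertices. -/
def chi (Z : Finset V) : V → ℚ := fun v => if v ∈ Z then 1 else 0

lemma sum_chi_mul (g : V → ℚ) (Z : Finset V) :
    ∑ u, g u * chi Z u = ∑ u ∈ Z, g u := by
  simp [chi, mul_ite, Finset.sum_ite_mem]

lemma lap_chi (m : V → V → ℕ) (Z : Finset V) :
    Lap m (chi Z) = fun v => -(tZ m Z v : ℚ) := by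
  funext v
  show ∑ u, (m v u : ℚ) * (chi Z v - chi Z u) = -(tZ m Z v : ℚ)
  by_cases hv : v ∈ Z
  · have h1 : ∀ u : V, (m v u : ℚ) * (chi Z v - chi Z u)
        = if u ∈ Zᶜ then (m v u : ℚ) else 0 := by
      intro u
      by_cases hu : u ∈ Z <;> simp [chi, hv, hu, Finset.mem_compl]
    rw [Finset.sum_congr rfl fun u _ => h1 u, Finset.sum_ite_mem, Finset.univ_inter]
    simp only [tZ, if_pos hv]
    push_cast
    ring
  · have h1 : ∀ u : V, (m v u : ℚ) * (chi Z v - chi Z u)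
        = if u ∈ Z then -(m v u : ℚ) else 0 := by
      intro u
      by_cases hu : u ∈ Z <;> simp [chi, hv, hu]
    rw [Finset.sum_congr rfl fun u _ => h1 u, Finset.sum_ite_mem, Finset.univ_inter]
    simp only [tZ, if_neg hv]
    push_cast
    rw [Finset.sum_neg_distrib]

end Semibal

/-- **Existence of semibalanced representatives (Caporaso).** -/
theorem exists_semibalanced {V : Type} [Fintype V] [DecidableEq V]
    (ω : V → ℕ) (m : V → V → ℕ) (hsymm : ∀ u v, m u v = m v u)
    (hconn : (assocGraph m).Connected)
    (hg : 2 ≤ genusW m ω)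
    (hss : ∀ v, ω v = 0 → 2 ≤ (∑ u, m v u) + m v v)
    (d : V → ℤ) :
    ∃ d' : V → ℤ, LinEquiv m d d' ∧
      ∀ Z : Finset V,
        (degDiv d : ℚ) * (∑ v ∈ Z, (canonicalW m ω v : ℚ)) / (2 * (genusW m ω : ℚ) - 2)
            - (∑ v ∈ Z, ∑ u ∈ Zᶜ, (m v u : ℚ)) / 2 ≤ ∑ v ∈ Z, (d' v : ℚ) ∧
        (∑ v ∈ Z, (d' v : ℚ)) ≤
          (degDiv d : ℚ) * (∑ v ∈ Z, (canonicalW m ω v : ℚ)) / (2 * (genusW m ω : ℚ) - 2)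
            + (∑ v ∈ Z, ∑ u ∈ Zᶜ, (m v u : ℚ)) / 2 := by
  classical
  haveI hne : Nonempty V := hconn.nonempty
  obtain ⟨v₀⟩ := id hne
  set Dz : ℤ := 2 * genusW m ω - 2 with hDzdef
  have hDzpos : 0 < Dz := by rw [hDzdef]; omega
  have hDq : (0:ℚ) < (Dz:ℚ) := by exact_mod_cast hDzpos
  have hDne : (Dz:ℚ) ≠ 0 := ne_of_gt hDq
  have hcanZ : ∑ v, canonicalW m ω v = Dz := by
    rw [hDzdef]; exact Semibal.canonical_sum m ω hsymm
  have hcan : ∑ v, (canonicalW m ω v : ℚ) = (Dz:ℚ) := by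
    have := congrArg (fun z : ℤ => (z : ℚ)) hcanZ
    push_cast at this
    exact this
  set q : V → ℚ := fun v => (degDiv d : ℚ) * (canonicalW m ω v : ℚ) / (Dz : ℚ) with hqdef
  set x₀ : V → ℚ := fun v => (d v : ℚ) - q v with hx0def
  have hx0sum : ∑ v, x₀ v = 0 := by
    simp only [hx0def, hqdef, Finset.sum_sub_distrib]
    rw [← Finset.sum_div, ← Finset.mul_sum, hcan, mul_div_assoc, div_self hDne, mul_one,
      sub_eq_zero]
    unfold degDiv
    push_cast
    rfl
  obtain ⟨F, hF⟩ : ∃ F : (V → ℚ) → (V → ℚ),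
      ∀ y : V → ℚ, (∑ v, y v = 0) → Semibal.Lap m (F y) = y := by
    have hs := Semibal.lap_surj m hsymm hconn
    exact ⟨fun y => if h : ∑ v, y v = 0 then (hs y h).choose else 0,
      fun y h => by simp only [dif_pos h]; exact (hs y h).choose_spec⟩
  set E : (V → ℚ) → ℚ := fun y => ∑ v, F y v * y v with hEdef
  have hC1 : ∀ y f : V → ℚ, (∑ v, y v = 0) → Semibal.Lap m f = y →
      E y = ∑ v, f v * y v := by
    intro y f hy hf
    calc E y = ∑ v, F y v * Semibal.Lap m f v := by rw [hf]
    _ = ∑ v, f v * Semibal.Lap m (F y) v := Semibal.lap_sym m hsymm f (F y)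
    _ = ∑ v, f v * y v := by rw [hF y hy]
  have hEnonneg : ∀ y : V → ℚ, (∑ v, y v = 0) → 0 ≤ E y := by
    intro y hy
    have h : E y = ∑ v, F y v * Semibal.Lap m (F y) v := by rw [hF y hy]
    rw [h]
    exact Semibal.lap_quad_nonneg m hsymm (F y)
  set cst : (V → ℤ) → (V → ℚ) := fun s v => (s v : ℚ) with hcstdef
  have hmem : ∀ s ∈ AddSubgroup.closure (Set.range (tZ m)),
      ∃ f : V → ℚ, Semibal.Lap m f = cst s ∧ ∀ v u : V, ∃ k : ℤ, f v - f u = (k : ℚ) := by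
    intro s hs
    induction hs using AddSubgroup.closure_induction with
    | mem x hx =>
      obtain ⟨Z, rfl⟩ := hx
      refine ⟨-(Semibal.chi Z), ?_, ?_⟩
      · rw [Semibal.lap_neg, Semibal.lap_chi]
        funext v
        simp [hcstdef]
      · intro v u
        simp only [Pi.neg_apply, Semibal.chi]
        by_cases hv : v ∈ Z <;> by_cases hu : u ∈ Z
        · exact ⟨0, by simp [hv, hu]⟩
        · exact ⟨-1, by simp [hv, hu]⟩
        · exact ⟨1, by simp [hv, hu]⟩
        · exact ⟨0, by simp [hv, hu]⟩
    | zero =>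
      exact ⟨0, by funext v; simp [Semibal.Lap, hcstdef], fun v u => ⟨0, by simp⟩⟩
    | add x y hx hy ihx ihy =>
      obtain ⟨f, hf, hfk⟩ := ihx
      obtain ⟨g, hg, hgk⟩ := ihy
      refine ⟨f + g, ?_, ?_⟩
      · rw [Semibal.lap_add, hf, hg]
        funext v
        simp [hcstdef]
      · intro v u
        obtain ⟨k1, h1⟩ := hfk v u
        obtain ⟨k2, h2⟩ := hgk v u
        refine ⟨k1 + k2, ?_⟩
        simp only [Pi.add_apply]
        push_cast
        linarith
    | neg x hx ihx =>
      obtain ⟨f, hf, hfk⟩ := ihx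
      refine ⟨-f, ?_, ?_⟩
      · rw [Semibal.lap_neg, hf]
        funext v
        simp [hcstdef]
      · intro v u
        obtain ⟨k, h⟩ := hfk v u
        refine ⟨-k, ?_⟩
        simp only [Pi.neg_apply]
        push_cast
        linarith
  have hsum0 : ∀ s ∈ AddSubgroup.closure (Set.range (tZ m)), ∑ v, cst s v = 0 := by
    intro s hs
    obtain ⟨f, hf, -⟩ := hmem s hs
    rw [← hf]
    exact Semibal.lap_sum_zero m hsymm f
  have hEint : ∀ s ∈ AddSubgroup.closure (Set.range (tZ m)),
      ∃ k : ℤ, E (cst s) = (k : ℚ) := by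
    intro s hs
    obtain ⟨f, hf, hfk⟩ := hmem s hs
    have h1 : E (cst s) = ∑ v, f v * cst s v := hC1 _ f (hsum0 s hs) hf
    have h2 : ∑ v, f v * cst s v = ∑ v, (f v - f v₀) * cst s v := by
      simp only [sub_mul, Finset.sum_sub_distrib, ← Finset.mul_sum, hsum0 s hs,
        mul_zero, sub_zero]
    refine ⟨∑ v, (hfk v v₀).choose * s v, ?_⟩
    rw [h1, h2]
    push_cast
    refine Finset.sum_congr rfl fun v _ => ?_
    rw [← (hfk v v₀).choose_spec]
  set f₀ : V → ℚ := F x₀ with hf0def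
  have hf0 : Semibal.Lap m f₀ = x₀ := hF x₀ hx0sum
  have hlin : ∀ s ∈ AddSubgroup.closure (Set.range (tZ m)),
      ∃ a : ℤ, (Dz:ℚ) * ∑ v, f₀ v * cst s v = (a:ℚ) := by
    intro s hs
    induction hs using AddSubgroup.closure_induction with
    | mem x hx =>
      obtain ⟨Z, rfl⟩ := hx
      have h1 : cst (tZ m Z) = -(Semibal.Lap m (Semibal.chi Z)) := by
        rw [Semibal.lap_chi]
        funext v
        simp [hcstdef]
      have hstep : ∑ v, f₀ v * cst (tZ m Z) v = -∑ v ∈ Z, x₀ v := by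
        rw [h1]
        simp only [Pi.neg_apply, mul_neg, Finset.sum_neg_distrib, neg_inj]
        rw [Semibal.lap_sym m hsymm (Semibal.chi Z) f₀, hf0]
        rw [Finset.sum_congr rfl fun v _ => mul_comm (Semibal.chi Z v) (x₀ v)]
        exact Semibal.sum_chi_mul x₀ Z
      refine ⟨-∑ v ∈ Z, (Dz * d v - degDiv d * canonicalW m ω v), ?_⟩
      rw [hstep]
      push_cast
      rw [mul_neg, neg_inj, Finset.mul_sum]
      refine Finset.sum_congr rfl fun v _ => ?_
      simp only [hx0def, hqdef]
      field_simp
    | zero => exact ⟨0, by simp [hcstdef]⟩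
    | add x y hx hy ihx ihy =>
      obtain ⟨a1, h1⟩ := ihx
      obtain ⟨a2, h2⟩ := ihy
      refine ⟨a1 + a2, ?_⟩
      have hxy : ∀ v, cst (x + y) v = cst x v + cst y v := by
        intro v; simp [hcstdef]
      rw [Finset.sum_congr rfl fun v _ => by rw [hxy v, mul_add]]
      rw [Finset.sum_add_distrib, mul_add, h1, h2]
      push_cast
      ring
    | neg x hx ihx =>
      obtain ⟨a, h⟩ := ihx
      refine ⟨-a, ?_⟩
      have hxn : ∀ v, cst (-x) v = -(cst x v) := by
        intro v; simp [hcstdef]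
      rw [Finset.sum_congr rfl fun v _ => by rw [hxn v, mul_neg]]
      rw [Finset.sum_neg_distrib, mul_neg, h]
      push_cast
      ring
  have hExp : ∀ s ∈ AddSubgroup.closure (Set.range (tZ m)),
      E (x₀ - cst s) = E x₀ - 2 * (∑ v, f₀ v * cst s v) + E (cst s) := by
    intro s hs
    obtain ⟨g, hg, -⟩ := hmem s hs
    have hsub : Semibal.Lap m (f₀ - g) = x₀ - cst s := by
      rw [Semibal.lap_sub, hf0, hg]
    have hsum' : ∑ v, (x₀ - cst s) v = 0 := by
      simp only [Pi.sub_apply, Finset.sum_sub_distrib, hx0sum, hsum0 s hs]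
      ring
    have h1 := hC1 _ _ hsum' hsub
    have h2 : ∑ v, g v * x₀ v = ∑ v, f₀ v * cst s v := by
      calc ∑ v, g v * x₀ v = ∑ v, g v * Semibal.Lap m f₀ v := by rw [hf0]
      _ = ∑ v, f₀ v * Semibal.Lap m g v := Semibal.lap_sym m hsymm f₀ g
      _ = ∑ v, f₀ v * cst s v := by rw [hg]
    have h3 : E (cst s) = ∑ v, g v * cst s v := hC1 _ g (hsum0 s hs) hg
    have h4 : E x₀ = ∑ v, f₀ v * x₀ v := hC1 _ f₀ hx0sum hf0
    rw [h1, h4, h3]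
    simp only [Pi.sub_apply, sub_mul, mul_sub, Finset.sum_sub_distrib]
    linarith [h2]
  have hscoreint : ∀ s ∈ AddSubgroup.closure (Set.range (tZ m)),
      ∃ k : ℤ, (Dz:ℚ) * (E x₀ - E (x₀ - cst s)) = (k:ℚ) := by
    intro s hs
    obtain ⟨a, ha⟩ := hlin s hs
    obtain ⟨b, hb⟩ := hEint s hs
    refine ⟨2*a - Dz*b, ?_⟩
    rw [hExp s hs]
    have : (Dz:ℚ) * (E x₀ - (E x₀ - 2 * (∑ v, f₀ v * cst s v) + E (cst s)))
        = 2 * ((Dz:ℚ) * ∑ v, f₀ v * cst s v) - (Dz:ℚ) * E (cst s) := by ring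
    rw [this, ha, hb]
    push_cast
    ring
  have hbdd : ∃ b : ℤ, ∀ z : ℤ,
      (∃ s ∈ AddSubgroup.closure (Set.range (tZ m)),
        (Dz:ℚ) * (E x₀ - E (x₀ - cst s)) = (z:ℚ)) → z ≤ b := by
    refine ⟨⌈(Dz:ℚ) * E x₀⌉, ?_⟩
    rintro z ⟨s, hs, hz⟩
    have hsz : ∑ v, (x₀ - cst s) v = 0 := by
      simp only [Pi.sub_apply, Finset.sum_sub_distrib, hx0sum, hsum0 s hs]
      ring
    have h0 : 0 ≤ E (x₀ - cst s) := hEnonneg _ hsz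
    have hzq : (z:ℚ) ≤ (Dz:ℚ) * E x₀ := by
      rw [← hz]
      nlinarith
    exact_mod_cast hzq.trans (Int.le_ceil _)
  have hinh : ∃ z : ℤ, ∃ s ∈ AddSubgroup.closure (Set.range (tZ m)),
      (Dz:ℚ) * (E x₀ - E (x₀ - cst s)) = (z:ℚ) := by
    refine ⟨0, 0, zero_mem _, ?_⟩
    have h0 : x₀ - cst 0 = x₀ := by
      funext v; simp [hcstdef]
    rw [h0]
    simp
  obtain ⟨k₀, ⟨sst, hsst, hsc⟩, hmax⟩ := Int.exists_greatest_of_bdd hbdd hinh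
  have hmin : ∀ s ∈ AddSubgroup.closure (Set.range (tZ m)),
      E (x₀ - cst sst) ≤ E (x₀ - cst s) := by
    intro s hs
    obtain ⟨k, hk⟩ := hscoreint s hs
    have hkP : ∃ s' ∈ AddSubgroup.closure (Set.range (tZ m)),
        (Dz:ℚ) * (E x₀ - E (x₀ - cst s')) = (k:ℚ) := ⟨s, hs, hk⟩
    have hle : (k:ℚ) ≤ (k₀:ℚ) := by exact_mod_cast hmax k hkP
    rw [← hk, ← hsc] at hle
    nlinarith
  -- sum of tZ over its own set
  have hts : ∀ W : Finset V, ∑ v ∈ W, (tZ m W v : ℚ)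
      = -(∑ v ∈ W, ∑ u ∈ Wᶜ, (m v u:ℚ)) := by
    intro W
    rw [← Finset.sum_neg_distrib]
    refine Finset.sum_congr rfl fun v hv => ?_
    simp only [tZ, if_pos hv]
    push_cast
    ring
  -- general step identity
  have hstep : ∀ (y : V → ℚ), (∑ v, y v = 0) → ∀ W : Finset V,
      E (y + cst (tZ m W)) = E y + (∑ v ∈ W, ∑ u ∈ Wᶜ, (m v u:ℚ)) - 2 * ∑ v ∈ W, y v := by
    intro y hy W
    have hLχ : Semibal.Lap m (Semibal.chi W) = -(cst (tZ m W)) := by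
      rw [Semibal.lap_chi]
      funext v
      simp [hcstdef]
    have hwit : Semibal.Lap m (F y - Semibal.chi W) = y + cst (tZ m W) := by
      rw [Semibal.lap_sub, hF y hy, hLχ]
      funext v
      simp
    have htsum : ∑ v, cst (tZ m W) v = 0 := by
      have h := Semibal.lap_sum_zero m hsymm (Semibal.chi W)
      rw [hLχ] at h
      simp only [Pi.neg_apply, Finset.sum_neg_distrib, neg_eq_zero] at h
      exact h
    have hysum' : ∑ v, (y + cst (tZ m W)) v = 0 := by
      simp only [Pi.add_apply, Finset.sum_add_distrib, hy, htsum]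
      ring
    have h1 := hC1 _ _ hysum' hwit
    have hfy : Semibal.Lap m (F y) = y := hF y hy
    have p2 : ∑ v, F y v * cst (tZ m W) v = -∑ v ∈ W, y v := by
      have hc : cst (tZ m W) = -(Semibal.Lap m (Semibal.chi W)) := by rw [hLχ]; simp
      rw [hc]
      simp only [Pi.neg_apply, mul_neg, Finset.sum_neg_distrib, neg_inj]
      rw [Semibal.lap_sym m hsymm (Semibal.chi W) (F y), hfy]
      rw [Finset.sum_congr rfl fun v _ => mul_comm (Semibal.chi W v) (y v)]
      exact Semibal.sum_chi_mul y W
    have p3 : ∑ v, Semibal.chi W v * y v = ∑ v ∈ W, y v := by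
      rw [Finset.sum_congr rfl fun v _ => mul_comm (Semibal.chi W v) (y v)]
      exact Semibal.sum_chi_mul y W
    have p4 : ∑ v, Semibal.chi W v * cst (tZ m W) v
        = -(∑ v ∈ W, ∑ u ∈ Wᶜ, (m v u:ℚ)) := by
      rw [Finset.sum_congr rfl fun v _ => mul_comm (Semibal.chi W v) (cst (tZ m W) v)]
      rw [Semibal.sum_chi_mul (cst (tZ m W)) W]
      exact hts W
    rw [h1]
    simp only [Pi.sub_apply, Pi.add_apply, sub_mul, mul_add, Finset.sum_add_distrib,
      Finset.sum_sub_distrib]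
    have hEy : ∑ v, F y v * y v = E y := rfl
    linarith [p2, p3, p4, hEy]
  set yst : V → ℚ := x₀ - cst sst with hystdef
  have hystsum : ∑ v, yst v = 0 := by
    simp only [hystdef, Pi.sub_apply, Finset.sum_sub_distrib, hx0sum, hsum0 sst hsst]
    ring
  -- the two bounds for every Z
  have hbound : ∀ Z : Finset V,
      -((∑ v ∈ Z, ∑ u ∈ Zᶜ, (m v u:ℚ)) / 2) ≤ ∑ v ∈ Z, yst v ∧
      ∑ v ∈ Z, yst v ≤ (∑ v ∈ Z, ∑ u ∈ Zᶜ, (m v u:ℚ)) / 2 := by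
    intro Z
    have htmem : tZ m Z ∈ AddSubgroup.closure (Set.range (tZ m)) :=
      AddSubgroup.subset_closure ⟨Z, rfl⟩
    constructor
    · -- lower bound, use sst + tZ
      have hs' : sst + tZ m Z ∈ AddSubgroup.closure (Set.range (tZ m)) :=
        add_mem hsst htmem
      have hysum2 : ∑ v, (yst - cst (tZ m Z)) v = 0 := by
        have htsum : ∑ v, cst (tZ m Z) v = 0 := hsum0 _ htmem
        simp only [Pi.sub_apply, Finset.sum_sub_distrib, hystsum, htsum]
        ring
      have he := hstep (yst - cst (tZ m Z)) hysum2 Z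
      have hre : yst - cst (tZ m Z) + cst (tZ m Z) = yst := by
        funext v; simp
      rw [hre] at he
      have hsz : ∑ v ∈ Z, (yst - cst (tZ m Z)) v = ∑ v ∈ Z, yst v
          + (∑ v ∈ Z, ∑ u ∈ Zᶜ, (m v u:ℚ)) := by
        simp only [Pi.sub_apply, Finset.sum_sub_distrib]
        have : ∑ v ∈ Z, cst (tZ m Z) v = -(∑ v ∈ Z, ∑ u ∈ Zᶜ, (m v u:ℚ)) := by
          rw [show ∑ v ∈ Z, cst (tZ m Z) v = ∑ v ∈ Z, (tZ m Z v : ℚ) from rfl]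
          exact hts Z
        rw [this]
        ring
      rw [hsz] at he
      -- he : E yst = E (yst - t) + c - 2*(Σ yst + c)
      have hx' : x₀ - cst (sst + tZ m Z) = yst - cst (tZ m Z) := by
        funext v
        simp [hystdef, hcstdef]
        push_cast
        ring
      have hm := hmin _ hs'
      rw [hx'] at hm
      -- hm : E yst' ≤ E (yst - t);  note E (x₀ - cst sst) = E yst
      have hm' : E yst ≤ E (yst - cst (tZ m Z)) := hm
      linarith
    · -- upper bound, use sst - tZ
      have hs' : sst - tZ m Z ∈ AddSubgroup.closure (Set.range (tZ m)) :=
        sub_mem hsst htmem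
      have he := hstep yst hystsum Z
      have hx' : x₀ - cst (sst - tZ m Z) = yst + cst (tZ m Z) := by
        funext v
        simp [hystdef, hcstdef]
        push_cast
        ring
      have hm := hmin _ hs'
      rw [hx'] at hm
      have hm' : E yst ≤ E (yst + cst (tZ m Z)) := hm
      linarith
  refine ⟨fun v => d v - sst v, ?_, ?_⟩
  · show d - (fun v => d v - sst v) ∈ AddSubgroup.closure (Set.range (tZ m))
    have hds : d - (fun v => d v - sst v) = sst := by
      funext v
      simp
    rw [hds]
    exact hsst
  · intro Z
    have hDrw : 2 * (genusW m ω : ℚ) - 2 = (Dz:ℚ) := by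
      rw [hDzdef]
      push_cast
      ring
    have hdsum : ∑ v ∈ Z, ((d v - sst v : ℤ):ℚ)
        = ∑ v ∈ Z, yst v
          + (degDiv d:ℚ) * (∑ v ∈ Z, (canonicalW m ω v:ℚ)) / (Dz:ℚ) := by
      have hpt : ∀ v, ((d v - sst v : ℤ):ℚ) = yst v + q v := by
        intro v
        simp only [hystdef, hx0def, hcstdef, Pi.sub_apply]
        push_cast
        ring
      rw [Finset.sum_congr rfl fun v _ => hpt v, Finset.sum_add_distrib]
      congr 1
      simp only [hqdef]
      rw [← Finset.sum_div, ← Finset.mul_sum]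
    obtain ⟨hlo, hhi⟩ := hbound Z
    rw [hDrw]
    constructor
    · rw [hdsum]
      linarith
    · rw [hdsum]
      linarith
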